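/- Let a₁, a₂, a₃ ∈ (0,1) with a₁ + a₃ < 1, and let A₅ = [[0, a₂, 1], [1, 0, 0], [a₁, 1, a₃]]. Then the symmetric game with payoff matrix A₅ has exactly one symmetric Nash equilibrium x in the standard simplex of ℝ³, and this x has all three coordinates strictly positive. -/

import Mathlib

/-- `x` is a symmetric Nash equilibrium of the symmetric game with payoff matrix `A`:
`x` lies in the standard simplex of `ℝ³` and `xᵀAx ≥ yᵀAx` for all `y` in the simplex. -/
def IsSymNash (A : Matrix (Fin 3) (Fin 3) ℝ) (x : Fin 3 → ℝ) : Prop :=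
  (∀ j, 0 ≤ x j) ∧ (∑ j, x j = 1) ∧
    ∀ y : Fin 3 → ℝ, (∀ j, 0 ≤ y j) → (∑ j, y j = 1) →
      dotProduct y (A.mulVec x) ≤ dotProduct x (A.mulVec x)

/-- Purely arithmetic core of the uniqueness argument. -/
lemma classA5_uniq_aux (a₁ a₂ a₃ : ℝ)
    (ha1 : 0 < a₁) (ha1' : a₁ < 1) (ha2 : 0 < a₂) (ha2' : a₂ < 1)
    (ha3 : 0 < a₃) (ha3' : a₃ < 1) (hsum : a₁ + a₃ < 1)
    (y0 y1 y2 v : ℝ)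
    (hy0 : 0 ≤ y0) (hy1 : 0 ≤ y1) (hy2 : 0 ≤ y2)
    (hysum' : y0 + y1 + y2 = 1)
    (hle0 : a₂ * y1 + y2 ≤ v) (hle1 : y0 ≤ v)
    (hle2 : a₁ * y0 + y1 + a₃ * y2 ≤ v)
    (hv : v = y0 * (a₂ * y1 + y2) + y1 * y0 + y2 * (a₁ * y0 + y1 + a₃ * y2)) :
    y0 = (1 - a₂*a₃) / (3 - a₁ - a₂ - a₃ + a₁*a₂ - a₂*a₃)
    ∧ y1 = (1 - a₁ - a₃) / (3 - a₁ - a₂ - a₃ + a₁*a₂ - a₂*a₃)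
    ∧ y2 = (1 - a₂ + a₁*a₂) / (3 - a₁ - a₂ - a₃ + a₁*a₂ - a₂*a₃) := by
  have hS : (0:ℝ) < 3 - a₁ - a₂ - a₃ + a₁*a₂ - a₂*a₃ := by nlinarith
  have ht0 : (0:ℝ) ≤ y0 * (v - (a₂ * y1 + y2)) := mul_nonneg hy0 (by linarith)
  have ht1 : (0:ℝ) ≤ y1 * (v - y0) := mul_nonneg hy1 (by linarith)
  have ht2 : (0:ℝ) ≤ y2 * (v - (a₁ * y0 + y1 + a₃ * y2)) := mul_nonneg hy2 (by linarith)
  have htsum : y0 * (v - (a₂ * y1 + y2)) + y1 * (v - y0)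
      + y2 * (v - (a₁ * y0 + y1 + a₃ * y2)) = 0 := by
    linear_combination v * hysum' + hv
  have hc0 : y0 * (v - (a₂ * y1 + y2)) = 0 := by linarith
  have hc1 : y1 * (v - y0) = 0 := by linarith
  have hc2 : y2 * (v - (a₁ * y0 + y1 + a₃ * y2)) = 0 := by linarith
  have hy0pos : 0 < y0 := by
    rcases lt_or_eq_of_le hy0 with h | h
    · exact h
    exfalso
    rcases lt_or_eq_of_le hy1 with h1 | h1
    · have hveq : v = y0 := by
        rcases mul_eq_zero.mp hc1 with h' | h'
        · linarith
        · linarith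
      have k1 : 0 ≤ a₁ * y0 := mul_nonneg ha1.le hy0
      have k2 : 0 ≤ a₃ * y2 := mul_nonneg ha3.le hy2
      linarith
    · have hy2v : y2 = 1 := by linarith
      have : v = a₃ := by rw [hv, ← h, ← h1, hy2v]; ring
      have k1 : 0 ≤ a₂ * y1 := mul_nonneg ha2.le hy1
      linarith
  have hy1pos : 0 < y1 := by
    rcases lt_or_eq_of_le hy1 with h | h
    · exact h
    exfalso
    have hy1z : a₂ * y1 = 0 := by rw [← h]; ring
    have hveq : v = a₂ * y1 + y2 := by
      rcases mul_eq_zero.mp hc0 with h' | h'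
      · linarith
      · linarith
    rcases lt_or_eq_of_le hy2 with h2 | h2
    · have hveq2 : v = a₁ * y0 + y1 + a₃ * y2 := by
        rcases mul_eq_zero.mp hc2 with h' | h'
        · linarith
        · linarith
      have k1 : a₁ * y0 < (1 - a₃) * y0 :=
        mul_lt_mul_of_pos_right (by linarith) hy0pos
      have k2 : (1 - a₃) * y0 ≤ (1 - a₃) * y2 := by
        apply mul_le_mul_of_nonneg_left _ (by linarith)
        linarith
      nlinarith [k1, k2]
    · have : y0 = 1 := by linarith
      linarith
  have hy2pos : 0 < y2 := by
    rcases lt_or_eq_of_le hy2 with h | h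
    · exact h
    exfalso
    have hveq : v = a₂ * y1 + y2 := by
      rcases mul_eq_zero.mp hc0 with h' | h'
      · linarith
      · linarith
    have hy2z : a₃ * y2 = 0 := by rw [← h]; ring
    have k1 : 0 < a₁ * y0 := mul_pos ha1 hy0pos
    have k2 : a₂ * y1 < y1 := by nlinarith
    linarith
  have he0 : v = a₂ * y1 + y2 := by
    rcases mul_eq_zero.mp hc0 with h' | h' <;> linarith
  have he1 : v = y0 := by
    rcases mul_eq_zero.mp hc1 with h' | h' <;> linarith
  have he2 : v = a₁ * y0 + y1 + a₃ * y2 := by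
    rcases mul_eq_zero.mp hc2 with h' | h' <;> linarith
  have e1 : a₂ * y1 + y2 = y0 := by linarith
  have e2 : a₁ * y0 + y1 + a₃ * y2 = y0 := by linarith
  refine ⟨?_, ?_, ?_⟩
  · rw [eq_div_iff hS.ne']
    linear_combination (a₃-1)*e1 + (a₂-1)*e2 + (1-a₂*a₃)*hysum'
  · rw [eq_div_iff hS.ne']
    linear_combination (a₁-a₃-1)*e1 + 2*e2 + (1-a₁-a₃)*hysum'
  · rw [eq_div_iff hS.ne']
    linear_combination (2-a₁)*e1 + (-1-a₂)*e2 + (1-a₂+a₁*a₂)*hysum'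

set_option maxHeartbeats 1000000 in
/-- The symmetric game with the given payoff matrix has exactly one symmetric Nash
equilibrium, and it is completely mixed. -/
theorem classA5_unique_completely_mixed (a₁ a₂ a₃ : ℝ)
    (h₁ : a₁ ∈ Set.Ioo (0:ℝ) 1) (h₂ : a₂ ∈ Set.Ioo (0:ℝ) 1) (h₃ : a₃ ∈ Set.Ioo (0:ℝ) 1)
    (hsum : a₁ + a₃ < 1) :
    ∃ x : Fin 3 → ℝ, IsSymNash !![0, a₂, 1; 1, 0, 0; a₁, 1, a₃] x ∧ (∀ j, 0 < x j) ∧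
      ∀ y : Fin 3 → ℝ, IsSymNash !![0, a₂, 1; 1, 0, 0; a₁, 1, a₃] y → y = x := by
  obtain ⟨ha1, ha1'⟩ := h₁
  obtain ⟨ha2, ha2'⟩ := h₂
  obtain ⟨ha3, ha3'⟩ := h₃
  have hD : (0:ℝ) < 1 - a₂*a₃ := by nlinarith
  have hN2 : (0:ℝ) < 1 - a₁ - a₃ := by linarith
  have hN3 : (0:ℝ) < 1 - a₂ + a₁*a₂ := by nlinarith
  have hS : (0:ℝ) < 3 - a₁ - a₂ - a₃ + a₁*a₂ - a₂*a₃ := by nlinarith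
  set S : ℝ := 3 - a₁ - a₂ - a₃ + a₁*a₂ - a₂*a₃ with hSdef
  set xv : Fin 3 → ℝ := ![(1 - a₂*a₃)/S, (1 - a₁ - a₃)/S, (1 - a₂ + a₁*a₂)/S] with hxv
  have hmul : (!![0, a₂, 1; 1, 0, 0; a₁, 1, a₃]).mulVec xv = fun _ => (1 - a₂*a₃)/S := by
    funext j
    fin_cases j <;>
      simp only [hxv, Matrix.mulVec, dotProduct, Fin.sum_univ_three,
          Fin.isValue, Matrix.cons_val', Matrix.cons_val_zero, Matrix.cons_val_one,
          Matrix.head_cons, Matrix.head_fin_const, Matrix.empty_val',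
          Matrix.cons_val_fin_one, Matrix.of_apply, Fin.mk_zero, Fin.mk_one,
          Matrix.cons_val_two, Matrix.tail_cons, Fin.reduceFinMk, Matrix.cons_val] <;>
      field_simp <;>
      ring
  have hval : ∀ z : Fin 3 → ℝ, (∑ j, z j = 1) →
      dotProduct z ((!![0, a₂, 1; 1, 0, 0; a₁, 1, a₃]).mulVec xv)
        = (1 - a₂*a₃)/S := by
    intro z hz
    have hz' : z 0 + z 1 + z 2 = 1 := by simpa [Fin.sum_univ_three] using hz
    rw [hmul]
    simp only [dotProduct, Fin.sum_univ_three]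
    linear_combination ((1 - a₂*a₃)/S) * hz'
  have hxvsum : ∑ j, xv j = 1 := by
    simp only [hxv, Fin.sum_univ_three, Matrix.cons_val_zero, Matrix.cons_val_one,
      Matrix.head_cons, Matrix.cons_val_two, Matrix.tail_cons]
    field_simp
    rw [hSdef]
    ring
  have hxvpos : ∀ j, 0 < xv j := by
    intro j
    fin_cases j
    · exact div_pos hD hS
    · exact div_pos hN2 hS
    · exact div_pos hN3 hS
  refine ⟨xv, ⟨fun j => (hxvpos j).le, hxvsum, ?_⟩, hxvpos, ?_⟩
  · intro y hy hysum
    rw [hval y hysum, hval xv hxvsum]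
  · intro y hy
    obtain ⟨hyn, hysum, hyineq⟩ := hy
    have hysum' : y 0 + y 1 + y 2 = 1 := by simpa [Fin.sum_univ_three] using hysum
    have hb0 : ((!![0, a₂, 1; 1, 0, 0; a₁, 1, a₃]).mulVec y) 0 = a₂ * y 1 + y 2 := by
      simp [Matrix.mulVec, dotProduct, Fin.sum_univ_three]
    have hb1 : ((!![0, a₂, 1; 1, 0, 0; a₁, 1, a₃]).mulVec y) 1 = y 0 := by
      simp [Matrix.mulVec, dotProduct, Fin.sum_univ_three]
    have hb2 : ((!![0, a₂, 1; 1, 0, 0; a₁, 1, a₃]).mulVec y) 2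
        = a₁ * y 0 + y 1 + a₃ * y 2 := by
      simp [Matrix.mulVec, dotProduct, Fin.sum_univ_three]
    have hv : dotProduct y ((!![0, a₂, 1; 1, 0, 0; a₁, 1, a₃]).mulVec y)
        = y 0 * (a₂ * y 1 + y 2) + y 1 * (y 0)
          + y 2 * (a₁ * y 0 + y 1 + a₃ * y 2) := by
      simp only [dotProduct, Fin.sum_univ_three, hb0, hb1, hb2]
    have hle0 : a₂ * y 1 + y 2 ≤
        dotProduct y ((!![0, a₂, 1; 1, 0, 0; a₁, 1, a₃]).mulVec y) := by
      have := hyineq ![1,0,0] (by intro j; fin_cases j <;> norm_num)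
        (by simp [Fin.sum_univ_three])
      simpa [dotProduct, Fin.sum_univ_three, hb0, hb1, hb2] using this
    have hle1 : y 0 ≤
        dotProduct y ((!![0, a₂, 1; 1, 0, 0; a₁, 1, a₃]).mulVec y) := by
      have := hyineq ![0,1,0] (by intro j; fin_cases j <;> norm_num)
        (by simp [Fin.sum_univ_three])
      simpa [dotProduct, Fin.sum_univ_three, hb0, hb1, hb2] using this
    have hle2 : a₁ * y 0 + y 1 + a₃ * y 2 ≤
        dotProduct y ((!![0, a₂, 1; 1, 0, 0; a₁, 1, a₃]).mulVec y) := by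
      have := hyineq ![0,0,1] (by intro j; fin_cases j <;> norm_num)
        (by simp [Fin.sum_univ_three])
      simpa [dotProduct, Fin.sum_univ_three, hb0, hb1, hb2] using this
    obtain ⟨u0, u1, u2⟩ := classA5_uniq_aux a₁ a₂ a₃ ha1 ha1' ha2 ha2' ha3 ha3' hsum
      (y 0) (y 1) (y 2) _ (hyn 0) (hyn 1) (hyn 2) hysum' hle0 hle1 hle2 hv
    funext j
    fin_cases j
    · exact u0
    · exact u1
    · exact u2
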